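/- arXiv:2406.09013 — 4 statements merged into one kernel-verified Lean document; each statement's English description precedes it below -/
import Mathlib

section
/- Let E be a Banach lattice and A a norm-bounded subset of E. Then T(A) is relatively compact in c₀ for every almost Dunford–Pettis operator T : E → c₀ if and only if every weak*-null almost L-sequence (fₙ) in E′ converges uniformly to zero on A, i.e. sup_{x∈A} |fₙ(x)| → 0. -/
open Filter Topology ZeroAtInfty Set Bornology

noncomputable section

section Defs

variable {E F X : Type*}

/-- Two elements of a lattice group are (lattice) disjoint. -/
def LatDisjoint [Lattice E] [AddCommGroup E] (x y : E) : Prop := |x| ⊓ |y| = 0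

/-- A pairwise disjoint sequence. -/
def DisjointSeq [Lattice E] [AddCommGroup E] (x : ℕ → E) : Prop :=
  ∀ m n, m ≠ n → LatDisjoint (x m) (x n)

variable [NormedAddCommGroup X] [NormedSpace ℝ X]

/-- A weakly null sequence in a normed space. -/
def WeaklyNull (x : ℕ → X) : Prop :=
  ∀ f : X →L[ℝ] ℝ, Tendsto (fun n => f (x n)) atTop (𝓝 0)

/-- A weakly Cauchy sequence. -/
def WeaklyCauchy (x : ℕ → X) : Prop :=
  ∀ f : X →L[ℝ] ℝ, ∃ l : ℝ, Tendsto (fun n => f (x n)) atTop (𝓝 l)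

/-- A weakly precompact set: every sequence has a weakly Cauchy subsequence. -/
def WeaklyPrecompactSet (A : Set X) : Prop :=
  ∀ x : ℕ → X, (∀ n, x n ∈ A) → ∃ φ : ℕ → ℕ, StrictMono φ ∧ WeaklyCauchy (x ∘ φ)

/-- A relatively weakly compact set: closure in the weak topology is compact. -/
def RelWeaklyCompact (A : Set X) : Prop :=
  IsCompact (closure ((toWeakSpace ℝ X) '' A))

/-- A weakly sequentially complete space. -/
def WeaklySeqComplete (X : Type*) [NormedAddCommGroup X] [NormedSpace ℝ X] : Prop :=
  ∀ x : ℕ → X, WeaklyCauchy x → ∃ l : X, ∀ f : X →L[ℝ] ℝ,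
    Tendsto (fun n => f (x n)) atTop (𝓝 (f l))

/-- A weak*-null sequence of functionals. -/
def WeakStarNull (f : ℕ → X →L[ℝ] ℝ) : Prop :=
  ∀ x : X, Tendsto (fun n => f n x) atTop (𝓝 0)

/-- A sequence of functionals converges uniformly to zero on a set `A`. -/
def UnifZeroOn (f : ℕ → X →L[ℝ] ℝ) (A : Set X) : Prop :=
  ∀ ε > (0:ℝ), ∃ N : ℕ, ∀ n ≥ N, ∀ x ∈ A, |f n x| < ε

/-- A limited set. -/
def LimitedSet (A : Set X) : Prop :=
  IsBounded A ∧ ∀ f : ℕ → X →L[ℝ] ℝ, WeakStarNull f → UnifZeroOn f A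

variable [NormedAddCommGroup E] [Lattice E] [HasSolidNorm E] [IsOrderedAddMonoid E] [NormedSpace ℝ E]
  [NormedAddCommGroup F] [Lattice F] [HasSolidNorm F] [IsOrderedAddMonoid F] [NormedSpace ℝ F]

/-- An almost Dunford–Pettis operator: sends disjoint weakly null sequences to norm null ones. -/
def AlmostDP (T : E →L[ℝ] X) : Prop :=
  ∀ x : ℕ → E, DisjointSeq x → WeaklyNull x → Tendsto (fun n => ‖T (x n)‖) atTop (𝓝 0)

/-- A Dunford–Pettis operator: sends weakly null sequences to norm null ones. -/
def DunfordPettisOp (T : E →L[ℝ] X) : Prop :=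
  ∀ x : ℕ → E, WeaklyNull x → Tendsto (fun n => ‖T (x n)‖) atTop (𝓝 0)

/-- An almost L-set in the dual: disjoint weakly null sequences of `E` converge to zero
uniformly on `B`. -/
def AlmostLSet (B : Set (E →L[ℝ] ℝ)) : Prop :=
  IsBounded B ∧ ∀ x : ℕ → E, DisjointSeq x → WeaklyNull x →
    ∀ ε > (0:ℝ), ∃ N : ℕ, ∀ n ≥ N, ∀ f ∈ B, |f (x n)| < ε

/-- An almost L-sequence in the dual. -/
def AlmostLSeq (f : ℕ → E →L[ℝ] ℝ) : Prop := AlmostLSet (Set.range f)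

/-- A super weakly precompact set: a bounded set mapped to a relatively compact subset of `c₀`
by every almost Dunford–Pettis operator. -/
def SuperWeaklyPrecompact (A : Set E) : Prop :=
  IsBounded A ∧ ∀ T : E →L[ℝ] C₀(ℕ, ℝ), AlmostDP T → IsCompact (closure (T '' A))

/-- The solid hull of a set in a Banach lattice. -/
def SolidHull (A : Set E) : Set E := {y | ∃ x ∈ A, |y| ≤ |x|}

/-- An L-weakly compact set. -/
def LWeaklyCompact (A : Set E) : Prop :=
  IsBounded A ∧ ∀ x : ℕ → E, (∀ n, x n ∈ SolidHull A) → DisjointSeq x →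
    Tendsto (fun n => ‖x n‖) atTop (𝓝 0)

/-- A disjointly weakly compact set. -/
def DisjointlyWeaklyCompact (A : Set E) : Prop :=
  IsBounded A ∧ ∀ x : ℕ → E, (∀ n, x n ∈ SolidHull A) → DisjointSeq x → WeaklyNull x

/-- The positive Schur property. -/
def PositiveSchur (E : Type*) [NormedAddCommGroup E] [Lattice E] [HasSolidNorm E] [IsOrderedAddMonoid E] [NormedSpace ℝ E] : Prop :=
  ∀ x : ℕ → E, DisjointSeq x → WeaklyNull x → Tendsto (fun n => ‖x n‖) atTop (𝓝 0)

/-- `|f|(|x|)`, via the Riesz–Kantorovich formula `|f|(|x|) = sup {f y : |y| ≤ |x|}`. -/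
def pabs (f : E →L[ℝ] ℝ) (x : E) : ℝ := sSup ((fun y => f y) '' {y : E | |y| ≤ |x|})

/-- Totally bounded for the absolute weak topology `|σ|(E,E')` generated by the
seminorms `x ↦ |f|(|x|)`. -/
def AWTotallyBounded (A : Set E) : Prop :=
  ∀ ε > (0:ℝ), ∀ s : Finset (E →L[ℝ] ℝ), ∃ Φ : Finset E, ↑Φ ⊆ A ∧
    ∀ x ∈ A, ∃ y ∈ Φ, ∀ f ∈ s, pabs f (x - y) < ε

/-- Pointwise order on the dual: `f ≤ g` iff `f x ≤ g x` for all `x ≥ 0`. -/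
def dualLe (f g : E →L[ℝ] ℝ) : Prop := ∀ x : E, 0 ≤ x → f x ≤ g x

/-- Order bounded operator: maps order intervals into order intervals. -/
def OrderBoundedOp (T : E →L[ℝ] F) : Prop :=
  ∀ a b : E, ∃ c d : F, T '' Set.Icc a b ⊆ Set.Icc c d

/-- PL-compact operator: the image of the closed unit ball is `|σ|(F,F')`-totally bounded. -/
def PLCompact (T : E →L[ℝ] F) : Prop :=
  AWTotallyBounded (T '' Metric.closedBall 0 1)

/-- AMAL-compact operator: the image of every order interval is `|σ|(F,F')`-totally bounded. -/
def AMALCompact (T : E →L[ℝ] F) : Prop :=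
  ∀ x : E, 0 ≤ x → AWTotallyBounded (T '' Set.Icc (-x) x)

/-- The dual norm is order continuous: `‖f_α‖ → 0` for every decreasing net `f_α ↓ 0`
of positive functionals. -/
def DualOrderContinuousNorm (E : Type*) [NormedAddCommGroup E] [Lattice E] [HasSolidNorm E] [IsOrderedAddMonoid E] [NormedSpace ℝ E] : Prop :=
  ∀ (ι : Type) (_ : Preorder ι) (_ : Nonempty ι),
    (∀ i j : ι, ∃ k, i ≤ k ∧ j ≤ k) → ∀ f : ι → E →L[ℝ] ℝ,
    (∀ i j, i ≤ j → dualLe (f j) (f i)) →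
    (∀ i, dualLe 0 (f i)) →
    (∀ g, (∀ i, dualLe g (f i)) → dualLe g 0) →
    Tendsto (fun i => ‖f i‖) atTop (𝓝 0)

/-- An atom of the dual lattice: a positive nonzero functional such that any two disjoint
positive functionals below it cannot both be nonzero. -/
def DualAtom (a : E →L[ℝ] ℝ) : Prop :=
  dualLe 0 a ∧ a ≠ 0 ∧
  ∀ b c : E →L[ℝ] ℝ, dualLe 0 b → dualLe b a → dualLe 0 c → dualLe c a →
    (∀ x : E, 0 ≤ x → ∀ ε > (0:ℝ), ∃ y : E, 0 ≤ y ∧ y ≤ x ∧ b y + c (x - y) < ε) →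
    b = 0 ∨ c = 0

/-- `|f|` is disjoint from the positive functional `a`, i.e. `(|f| ⊓ a)(x) = 0` for `x ≥ 0`. -/
def dualAbsDisjoint (f a : E →L[ℝ] ℝ) : Prop :=
  ∀ x : E, 0 ≤ x → ∀ ε > (0:ℝ), ∃ y : E, 0 ≤ y ∧ y ≤ x ∧ pabs f y + a (x - y) < ε

/-- The dual Banach lattice is discrete: the band generated by its atoms is everything,
i.e. the disjoint complement of the set of atoms is trivial. -/
def DualDiscrete (E : Type*) [NormedAddCommGroup E] [Lattice E] [HasSolidNorm E] [IsOrderedAddMonoid E] [NormedSpace ℝ E] : Prop :=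
  ∀ f : E →L[ℝ] ℝ, (∀ a : E →L[ℝ] ℝ, DualAtom a → dualAbsDisjoint f a) → f = 0

/-- The absolute weak* topology `|σ|(E',E)` on the dual, generated by the
seminorms `f ↦ |f|(|x|)`. -/
def awStarTop (E : Type*) [NormedAddCommGroup E] [Lattice E] [HasSolidNorm E] [IsOrderedAddMonoid E] [NormedSpace ℝ E] :
    TopologicalSpace (E →L[ℝ] ℝ) :=
  ⨅ x : E, TopologicalSpace.induced (fun f => pabs f x) inferInstance

end Defs

/-- Build an element of `C₀(ℕ, ℝ)` from a sequence tending to zero. -/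
def c0mk (g : ℕ → ℝ) (h : Tendsto g atTop (𝓝 0)) : C₀(ℕ, ℝ) :=
  ⟨⟨g, continuous_of_discreteTopology⟩, by rwa [cocompact_eq_atTop (α := ℕ)]⟩

@[simp] lemma c0mk_apply (g : ℕ → ℝ) (h : Tendsto g atTop (𝓝 0)) (n : ℕ) :
    c0mk g h n = g n := rfl

lemma c0_apply_le (g : C₀(ℕ, ℝ)) (n : ℕ) : |g n| ≤ ‖g‖ := by
  rw [← ZeroAtInftyContinuousMap.norm_toBCF_eq_norm, ← Real.norm_eq_abs]
  exact BoundedContinuousFunction.norm_coe_le_norm g.toBCF n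

lemma c0_norm_le (g : C₀(ℕ, ℝ)) {C : ℝ} (hC : 0 ≤ C) (h : ∀ n, |g n| ≤ C) : ‖g‖ ≤ C := by
  rw [← ZeroAtInftyContinuousMap.norm_toBCF_eq_norm]
  exact (BoundedContinuousFunction.norm_le hC).2 fun n => by simpa [Real.norm_eq_abs] using h n

lemma c0_tail (g : C₀(ℕ, ℝ)) {ε : ℝ} (hε : 0 < ε) : ∃ N, ∀ n ≥ N, |g n| < ε := by
  have h1 := zero_at_infty g
  rw [cocompact_eq_atTop (α := ℕ)] at h1
  have h2 := Metric.tendsto_nhds.mp h1 ε hε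
  rw [eventually_atTop] at h2
  obtain ⟨N, hN⟩ := h2
  exact ⟨N, fun n hn => by simpa [Real.dist_eq] using hN n hn⟩

/-- Truncation of a finite vector into `C₀(ℕ, ℝ)`. -/
def truncC0 (N : ℕ) (v : Fin N → ℝ) : C₀(ℕ, ℝ) :=
  c0mk (fun n => if h : n < N then v ⟨n, h⟩ else 0)
    (tendsto_const_nhds.congr' (eventually_atTop.mpr
      ⟨N, fun n hn => by simp [Nat.not_lt.mpr hn]⟩))

theorem stmt0 {E : Type*} [NormedAddCommGroup E] [Lattice E] [HasSolidNorm E] [IsOrderedAddMonoid E] [NormedSpace ℝ E] [CompleteSpace E] (A : Set E) (hA : IsBounded A) :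
    (∀ T : E →L[ℝ] C₀(ℕ, ℝ), AlmostDP T → IsCompact (closure (T '' A))) ↔
      (∀ f : ℕ → E →L[ℝ] ℝ, WeakStarNull f → AlmostLSeq f → UnifZeroOn f A) := by
  constructor
  · -- compactness for all almost DP operators implies uniform convergence
    intro hT f hws hL ε hε
    obtain ⟨C, hC⟩ := isBounded_iff_forall_norm_le.mp hL.1
    have hC' : ∀ n, ‖f n‖ ≤ C := fun n => hC _ ⟨n, rfl⟩
    have hC0 : 0 ≤ C := le_trans (norm_nonneg _) (hC' 0)
    set T : E →L[ℝ] C₀(ℕ, ℝ) := LinearMap.mkContinuous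
      { toFun := fun x => c0mk (fun n => f n x) (hws x)
        map_add' := fun x y => by ext n; simp
        map_smul' := fun c x => by ext n; simp } C (fun x => by
          refine c0_norm_le _ (by positivity) fun n => ?_
          calc |f n x| ≤ ‖f n‖ * ‖x‖ := (f n).le_opNorm x
            _ ≤ C * ‖x‖ := by gcongr; exact hC' n) with hTdef
    have hTx : ∀ x n, T x n = f n x := fun x n => rfl
    have hADP : AlmostDP T := by
      intro x hdisj hwnull
      rw [Metric.tendsto_atTop]
      intro δ hδ
      obtain ⟨N, hN⟩ := hL.2 x hdisj hwnull (δ / 2) (half_pos hδ)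
      refine ⟨N, fun k hk => ?_⟩
      have hnorm : ‖T (x k)‖ ≤ δ / 2 :=
        c0_norm_le _ (le_of_lt (half_pos hδ)) fun n =>
          le_of_lt (hN k hk (f n) ⟨n, rfl⟩)
      rw [Real.dist_eq, sub_zero, abs_of_nonneg (norm_nonneg _)]
      exact lt_of_le_of_lt hnorm (half_lt_self hδ)
    have htb : TotallyBounded (T '' A) :=
      (hT T hADP).totallyBounded.subset subset_closure
    obtain ⟨t, htfin, hcov⟩ := Metric.totallyBounded_iff.mp htb (ε / 2) (half_pos hε)
    choose Nf hNf using fun y : C₀(ℕ, ℝ) => c0_tail y (half_pos hε)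
    refine ⟨htfin.toFinset.sup Nf, fun n hn x hxA => ?_⟩
    have hmem : T x ∈ ⋃ y ∈ t, Metric.ball y (ε / 2) := hcov ⟨x, hxA, rfl⟩
    simp only [mem_iUnion, exists_prop] at hmem
    obtain ⟨y, hyt, hy⟩ := hmem
    have h2 : ‖T x - y‖ < ε / 2 := by rwa [Metric.mem_ball, dist_eq_norm] at hy
    have h1 : |T x n - y n| ≤ ‖T x - y‖ := by
      simpa using c0_apply_le (T x - y) n
    have h3 : |y n| < ε / 2 :=
      hNf y n (le_trans (Finset.le_sup (htfin.mem_toFinset.mpr hyt)) hn)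
    have : |f n x| = |(T x n - y n) + y n| := by rw [← hTx x n]; ring_nf
    rw [this]
    calc |(T x n - y n) + y n| ≤ |T x n - y n| + |y n| := abs_add_le _ _
      _ < ε / 2 + ε / 2 := add_lt_add_of_le_of_lt (lt_of_le_of_lt h1 h2).le h3
      _ = ε := add_halves ε
  · -- uniform convergence for all weak*-null almost L-sequences implies compactness
    intro h T hADP
    set f : ℕ → E →L[ℝ] ℝ := fun n => LinearMap.mkContinuous
      { toFun := fun x => T x n
        map_add' := fun x y => by simp
        map_smul' := fun c x => by simp } ‖T‖ (fun x =>
          le_trans (c0_apply_le (T x) n) (T.le_opNorm x)) with hfdef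
    have hws : WeakStarNull f := by
      intro x
      have h1 := zero_at_infty (T x)
      rw [cocompact_eq_atTop (α := ℕ)] at h1
      exact h1
    have hL : AlmostLSeq f := by
      refine ⟨isBounded_iff_forall_norm_le.mpr ⟨‖T‖, ?_⟩, ?_⟩
      · rintro g ⟨n, rfl⟩
        exact LinearMap.mkContinuous_norm_le _ (norm_nonneg T) _
      · intro x hdisj hwnull δ hδ
        have h1 := hADP x hdisj hwnull
        rw [Metric.tendsto_atTop] at h1
        obtain ⟨N, hN⟩ := h1 δ hδ
        refine ⟨N, fun k hk g hg => ?_⟩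
        obtain ⟨n, rfl⟩ := hg
        have h2 := hN k hk
        rw [Real.dist_eq, sub_zero, abs_of_nonneg (norm_nonneg _)] at h2
        exact lt_of_le_of_lt (c0_apply_le (T (x k)) n) h2
    have hU : UnifZeroOn f A := h f hws hL
    refine TotallyBounded.isCompact_of_isClosed (TotallyBounded.closure ?_) isClosed_closure
    rw [Metric.totallyBounded_iff]
    intro ε hε
    obtain ⟨B, hB⟩ := isBounded_iff_forall_norm_le.mp hA
    set C := max 0 (‖T‖ * B) with hCdef
    have hC0 : (0:ℝ) ≤ C := le_max_left _ _
    have hTA : ∀ x ∈ A, ‖T x‖ ≤ C := fun x hx =>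
      le_trans (le_trans (T.le_opNorm x)
        (mul_le_mul_of_nonneg_left (hB x hx) (norm_nonneg T))) (le_max_right _ _)
    obtain ⟨N, hN⟩ := hU (ε / 3) (by positivity)
    have hcpt : IsCompact (Metric.closedBall (0 : Fin N → ℝ) C) :=
      isCompact_closedBall _ _
    obtain ⟨D, hDfin, hDcov⟩ :=
      Metric.totallyBounded_iff.mp hcpt.totallyBounded (ε / 3) (by positivity)
    refine ⟨truncC0 N '' D, hDfin.image _, ?_⟩
    rintro g ⟨x, hxA, rfl⟩
    have hv : (fun i : Fin N => T x i) ∈ Metric.closedBall (0 : Fin N → ℝ) C := by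
      rw [Metric.mem_closedBall, dist_zero_right]
      refine (pi_norm_le_iff_of_nonneg hC0).mpr fun i => ?_
      calc ‖T x i‖ = |T x i| := Real.norm_eq_abs _
        _ ≤ ‖T x‖ := c0_apply_le (T x) i
        _ ≤ C := hTA x hxA
    have hmem := hDcov hv
    simp only [mem_iUnion, exists_prop] at hmem
    obtain ⟨v, hvD, hball⟩ := hmem
    have hvdist : ‖(fun i : Fin N => T x i) - v‖ < ε / 3 := by
      rwa [Metric.mem_ball, dist_eq_norm] at hball
    simp only [mem_iUnion, exists_prop]
    refine ⟨truncC0 N v, ⟨v, hvD, rfl⟩, ?_⟩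
    rw [Metric.mem_ball, dist_eq_norm]
    have hcoord : ∀ n, |(T x - truncC0 N v) n| ≤ ε / 3 := by
      intro n
      have hco : (T x - truncC0 N v) n = T x n - truncC0 N v n := rfl
      rw [hco]
      by_cases hn : n < N
      · have h1 : truncC0 N v n = v ⟨n, hn⟩ := by simp [truncC0, hn]
        rw [h1]
        have h2 := norm_le_pi_norm ((fun i : Fin N => T x i) - v) ⟨n, hn⟩
        simp only [Pi.sub_apply, Real.norm_eq_abs] at h2
        exact le_of_lt (lt_of_le_of_lt h2 hvdist)
      · have h1 : truncC0 N v n = 0 := by simp [truncC0, hn]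
        rw [h1, sub_zero]
        exact le_of_lt (hN n (Nat.not_lt.mp hn) x hxA)
    calc ‖T x - truncC0 N v‖ ≤ ε / 3 := c0_norm_le _ (by positivity) hcoord
      _ < ε := by linarith


end
end

section
/- Let E be a Banach lattice and A a norm-bounded subset of E. If fₙ(xₙ) → 0 for every weak*-null almost L-sequence (fₙ) in E′ and every sequence (xₙ) in A, then sup_{x∈A} |fₙ(x)| → 0 for every weak*-null almost L-sequence (fₙ) in E′. -/
open Filter Topology ZeroAtInfty Set Bornology

noncomputable section

theorem stmt1 {E : Type*} [NormedAddCommGroup E] [Lattice E] [HasSolidNorm E] [IsOrderedAddMonoid E] [NormedSpace ℝ E] [CompleteSpace E] (A : Set E) (hA : IsBounded A)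
    (h : ∀ f : ℕ → E →L[ℝ] ℝ, WeakStarNull f → AlmostLSeq f →
      ∀ x : ℕ → E, (∀ n, x n ∈ A) → Tendsto (fun n => f n (x n)) atTop (𝓝 0)) :
    ∀ f : ℕ → E →L[ℝ] ℝ, WeakStarNull f → AlmostLSeq f → UnifZeroOn f A := by
  intro f hws hL
  by_contra hcon
  unfold UnifZeroOn at hcon
  push_neg at hcon
  obtain ⟨ε, hε, hbad⟩ := hcon
  have hfreq : ∃ᶠ n in atTop, ∃ x ∈ A, ε ≤ |f n x| := by
    rw [Filter.frequently_atTop]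
    intro N
    obtain ⟨n, hn, x, hx, hfx⟩ := hbad N
    exact ⟨n, hn, x, hx, hfx⟩
  obtain ⟨φ, hφ, hP⟩ := Filter.extraction_of_frequently_atTop hfreq
  choose x hxA hxε using hP
  have hws' : WeakStarNull (f ∘ φ) := fun y =>
    (hws y).comp hφ.tendsto_atTop
  have hL' : AlmostLSeq (f ∘ φ) := by
    obtain ⟨hb, hdis⟩ := hL
    have hsub : Set.range (f ∘ φ) ⊆ Set.range f := Set.range_comp_subset_range φ f
    exact ⟨hb.subset hsub, fun z hz hwn ε' hε' => by
      obtain ⟨N, hN⟩ := hdis z hz hwn ε' hε'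
      exact ⟨N, fun n hn g hg => hN n hn g (hsub hg)⟩⟩
  have := h (f ∘ φ) hws' hL' x hxA
  have hlt := (this.eventually (eventually_abs_sub_lt 0 hε)).exists
  obtain ⟨k, hk⟩ := hlt
  simp only [sub_zero] at hk
  exact absurd hk (not_lt.2 (hxε k))

end
end

section
/- Every |σ|(E,E′)-totally bounded subset A of a Banach lattice E is disjointly weakly compact, i.e., every disjoint sequence in the solid hull of A is weakly null. -/
open Filter Topology ZeroAtInfty Set Bornology

noncomputable section

section Aux2
variable {E : Type*} [NormedAddCommGroup E] [Lattice E] [HasSolidNorm E] [IsOrderedAddMonoid E] [NormedSpace ℝ E]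

lemma my_abs_le {a b : E} (h1 : -b ≤ a) (h2 : a ≤ b) : |a| ≤ b :=
  abs_le'.2 ⟨h2, neg_le.2 (by simpa using h1)⟩

lemma my_abs_le_iff {a b : E} (h : |a| ≤ b) : -b ≤ a ∧ a ≤ b := by
  obtain ⟨h2, h3⟩ := abs_le'.1 h
  exact ⟨neg_le.1 h3, h2⟩

lemma pabs_set_nonempty (f : E →L[ℝ] ℝ) (x : E) :
    ((fun y => f y) '' {y : E | |y| ≤ |x|}).Nonempty :=
  ⟨f 0, 0, by simp, rfl⟩

lemma pabs_bddAbove (f : E →L[ℝ] ℝ) (x : E) :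
    BddAbove ((fun y => f y) '' {y : E | |y| ≤ |x|}) := by
  refine ⟨‖f‖ * ‖x‖, ?_⟩
  rintro _ ⟨y, hy, rfl⟩
  calc f y ≤ |f y| := le_abs_self _
    _ ≤ ‖f‖ * ‖y‖ := by simpa [Real.norm_eq_abs] using f.le_opNorm y
    _ ≤ ‖f‖ * ‖x‖ := by
        have hyx : ‖y‖ ≤ ‖x‖ := by simpa using HasSolidNorm.solid hy
        exact mul_le_mul_of_nonneg_left hyx (norm_nonneg f)

lemma le_pabs (f : E →L[ℝ] ℝ) {y x : E} (h : |y| ≤ |x|) : f y ≤ pabs f x :=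
  le_csSup (pabs_bddAbove f x) ⟨y, h, rfl⟩

lemma pabs_nonneg (f : E →L[ℝ] ℝ) (x : E) : 0 ≤ pabs f x := by
  have h0 : |(0:E)| ≤ |x| := by simp
  simpa using le_pabs f h0

lemma abs_le_pabs (f : E →L[ℝ] ℝ) {y x : E} (h : |y| ≤ |x|) : |f y| ≤ pabs f x := by
  rw [abs_le]
  refine ⟨?_, le_pabs f h⟩
  have h' : |(-y)| ≤ |x| := by simpa using h
  have h2 := le_pabs f h'
  rw [map_neg] at h2
  linarith

lemma pabs_mono (f : E →L[ℝ] ℝ) {x y : E} (h : |x| ≤ |y|) : pabs f x ≤ pabs f y :=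
  csSup_le_csSup (pabs_bddAbove f y) (pabs_set_nonempty f x)
    (Set.image_mono (fun z hz => le_trans hz h))

lemma pabs_abs (f : E →L[ℝ] ℝ) (x : E) : pabs f |x| = pabs f x := by
  simp [pabs, abs_abs]

lemma riesz_decomp {y u v : E} (hu : 0 ≤ u) (hv : 0 ≤ v) (h : |y| ≤ u + v) :
    ∃ y1 : E, |y1| ≤ u ∧ |y - y1| ≤ v := by
  obtain ⟨h1, h2⟩ := my_abs_le_iff h
  refine ⟨(y ⊓ u) ⊔ (-u), ?_, ?_⟩
  · refine my_abs_le le_sup_right (sup_le inf_le_right ((neg_nonpos.2 hu).trans hu))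
  · refine my_abs_le ?_ ?_
    · -- -v ≤ y - y1  ⟸  y1 ≤ y + v
      have hy1 : (y ⊓ u) ⊔ (-u) ≤ y + v := by
        refine sup_le (inf_le_left.trans (le_add_of_nonneg_right hv)) ?_
        calc (-u) = -(u+v) + v := by abel
          _ ≤ y + v := add_le_add_left h1 v
      have h3 := sub_le_sub_left hy1 y
      calc (-v) = y - (y + v) := by abel
        _ ≤ y - ((y ⊓ u) ⊔ (-u)) := h3
    · -- y - y1 ≤ v ⟸ y - v ≤ y1
      have hy1 : y - v ≤ (y ⊓ u) ⊔ (-u) := by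
        refine le_trans (le_inf (sub_le_self y hv) ?_) le_sup_left
        exact sub_le_iff_le_add.2 (by simpa [add_comm] using h2)
      have h3 := sub_le_sub_left hy1 y
      calc y - ((y ⊓ u) ⊔ (-u)) ≤ y - (y - v) := h3
        _ = v := by abel

lemma pabs_le_add (f : E →L[ℝ] ℝ) {z u v : E} (hu : 0 ≤ u) (hv : 0 ≤ v)
    (h : |z| ≤ u + v) : pabs f z ≤ pabs f u + pabs f v := by
  refine csSup_le (pabs_set_nonempty f z) ?_
  rintro _ ⟨y, hy, rfl⟩
  obtain ⟨y1, hy1, hy2⟩ := riesz_decomp hu hv (le_trans hy h)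
  have e : f y = f y1 + f (y - y1) := by rw [← map_add]; congr 1; abel
  show f y ≤ _
  rw [e]
  refine add_le_add (le_pabs f ?_) (le_pabs f ?_)
  · rwa [abs_of_nonneg hu]
  · rwa [abs_of_nonneg hv]

lemma add_pabs_le (f : E →L[ℝ] ℝ) {u v : E} (hu : 0 ≤ u) (hv : 0 ≤ v) :
    pabs f u + pabs f v ≤ pabs f (u + v) := by
  have key : ∀ y1 ∈ {y : E | |y| ≤ |u|}, ∀ y2 ∈ {y : E | |y| ≤ |v|},
      f y1 + f y2 ≤ pabs f (u + v) := by
    intro y1 hy1 y2 hy2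
    rw [← map_add]
    refine le_pabs f ?_
    rw [abs_of_nonneg hu] at hy1
    rw [abs_of_nonneg hv] at hy2
    rw [abs_of_nonneg (add_nonneg hu hv)]
    exact (abs_add_le _ _).trans (add_le_add hy1 hy2)
  refine le_sub_iff_add_le.mp (csSup_le (pabs_set_nonempty f u) ?_)
  rintro _ ⟨y1, hy1, rfl⟩
  refine le_sub_iff_add_le.mpr ?_
  rw [add_comm]
  refine le_sub_iff_add_le.mp (csSup_le (pabs_set_nonempty f v) ?_)
  rintro _ ⟨y2, hy2, rfl⟩
  refine le_sub_iff_add_le.mpr ?_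
  rw [add_comm]
  exact key y1 hy1 y2 hy2

lemma sum_pabs_le (f : E →L[ℝ] ℝ) (s : Finset ℕ) (u : ℕ → E) (hu : ∀ n, 0 ≤ u n) :
    ∑ n ∈ s, pabs f (u n) ≤ pabs f (∑ n ∈ s, u n) := by
  induction s using Finset.cons_induction with
  | empty => simpa using pabs_nonneg f 0
  | cons k s hk ih =>
    rw [Finset.sum_cons, Finset.sum_cons]
    calc pabs f (u k) + ∑ n ∈ s, pabs f (u n)
        ≤ pabs f (u k) + pabs f (∑ n ∈ s, u n) := by linarith
      _ ≤ pabs f (u k + ∑ n ∈ s, u n) :=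
          add_pabs_le f (hu k) (Finset.sum_nonneg fun n _ => hu n)

omit [NormedSpace ℝ E] in
lemma inf_add_le' {a b c : E} (ha : 0 ≤ a) (hb : 0 ≤ b) (hc : 0 ≤ c) :
    a ⊓ (b + c) ≤ a ⊓ b + a ⊓ c := by
  have h1 : a ⊓ (b + c) - a ⊓ b ≤ c := by
    rw [sub_inf]
    refine sup_le ?_ ?_
    · exact le_trans (sub_nonpos.2 inf_le_left) hc
    · exact sub_le_iff_le_add.2 (by simpa [add_comm] using inf_le_right (a := a) (b := b + c))
  have h2 : a ⊓ (b + c) - a ⊓ b ≤ a :=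
    le_trans (sub_le_self _ (le_inf ha hb)) inf_le_left
  have h3 : a ⊓ (b + c) - a ⊓ b ≤ a ⊓ c := le_inf h2 h1
  calc a ⊓ (b + c) = (a ⊓ (b+c) - a ⊓ b) + a ⊓ b := by abel
    _ ≤ a ⊓ c + a ⊓ b := add_le_add_left h3 _
    _ = a ⊓ b + a ⊓ c := by abel

omit [NormedSpace ℝ E] in
lemma inf_sum_eq_zero {a : E} (ha : 0 ≤ a) (s : Finset ℕ) (u : ℕ → E)
    (hu : ∀ n, 0 ≤ u n) (h : ∀ n ∈ s, a ⊓ u n = 0) : a ⊓ ∑ n ∈ s, u n = 0 := by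
  induction s using Finset.cons_induction with
  | empty => simpa using inf_eq_right.2 ha
  | cons k s hk ih =>
    rw [Finset.sum_cons]
    have hs : 0 ≤ ∑ n ∈ s, u n := Finset.sum_nonneg fun n _ => hu n
    refine le_antisymm ?_ (le_inf ha (add_nonneg (hu k) hs))
    calc a ⊓ (u k + ∑ n ∈ s, u n) ≤ a ⊓ u k + a ⊓ ∑ n ∈ s, u n := inf_add_le' ha (hu k) hs
      _ = 0 := by
          rw [h k (Finset.mem_cons_self k s),
            ih (fun n hn => h n (Finset.mem_cons_of_mem hn))]; simp

omit [NormedSpace ℝ E] in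
lemma disjoint_sum_le' (s : Finset ℕ) (u : ℕ → E) (hu : ∀ n, 0 ≤ u n)
    (hd : ∀ m n, m ≠ n → u m ⊓ u n = 0) (w : E) (hw : ∀ n, u n ≤ w) (hw0 : 0 ≤ w) :
    ∑ n ∈ s, u n ≤ w := by
  induction s using Finset.cons_induction with
  | empty => simpa using hw0
  | cons k s hk ih =>
    rw [Finset.sum_cons]
    have h0 : u k ⊓ ∑ n ∈ s, u n = 0 :=
      inf_sum_eq_zero (hu k) s u hu (fun n hn => hd k n (by rintro rfl; exact hk hn))
    calc u k + ∑ n ∈ s, u n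
        = u k ⊓ (∑ n ∈ s, u n) + u k ⊔ (∑ n ∈ s, u n) := (inf_add_sup _ _).symm
      _ = u k ⊔ (∑ n ∈ s, u n) := by rw [h0, zero_add]
      _ ≤ w := sup_le (hw k) ih


lemma pabs_inf_tendsto (f : E →L[ℝ] ℝ) (x : ℕ → E)
    (hd : ∀ m n, m ≠ n → |x m| ⊓ |x n| = 0) (y : E) :
    Tendsto (fun n => pabs f (|x n| ⊓ |y|)) atTop (𝓝 0) := by
  set u : ℕ → E := fun n => |x n| ⊓ |y| with hu
  have hun : ∀ n, 0 ≤ u n := fun n => le_inf (abs_nonneg _) (abs_nonneg _)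
  have hdis : ∀ m n, m ≠ n → u m ⊓ u n = 0 := fun m n h =>
    le_antisymm (le_trans (inf_le_inf inf_le_left inf_le_left) (hd m n h).le)
      (le_inf (hun m) (hun n))
  have hsum : ∀ N, ∑ n ∈ Finset.range N, pabs f (u n) ≤ pabs f |y| := by
    intro N
    refine (sum_pabs_le f _ u hun).trans (pabs_mono f ?_)
    rw [abs_of_nonneg (Finset.sum_nonneg fun n _ => hun n), abs_abs]
    exact disjoint_sum_le' _ u hun hdis |y| (fun n => inf_le_right) (abs_nonneg _)
  have hsummable : Summable (fun n => pabs f (u n)) :=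
    summable_of_sum_range_le (fun n => pabs_nonneg f _) hsum
  exact hsummable.tendsto_atTop_zero

end Aux2

theorem stmt12 {E : Type*} [NormedAddCommGroup E] [Lattice E] [HasSolidNorm E] [IsOrderedAddMonoid E] [NormedSpace ℝ E] [CompleteSpace E] (A : Set E) (hA : AWTotallyBounded A) :
    ∀ x : ℕ → E, (∀ n, x n ∈ SolidHull A) → DisjointSeq x → WeaklyNull x := by
  intro x hx hdisj f
  rw [Metric.tendsto_atTop]
  intro ε hε
  obtain ⟨Φ, hΦA, hΦ⟩ := hA (ε/2) (by linarith) {f}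
  simp only [SolidHull, Set.mem_setOf_eq] at hx
  choose a haA hxa using hx
  choose y hyΦ hyp using fun n => hΦ (a n) (haA n)
  have hyf : ∀ n, pabs f (a n - y n) < ε/2 := fun n => hyp n f (Finset.mem_singleton_self f)
  have hd' : ∀ m n, m ≠ n → |x m| ⊓ |x n| = 0 := fun m n h => hdisj m n h
  have hev : ∀ᶠ n in atTop, ∀ z ∈ Φ, pabs f (|x n| ⊓ |z|) < ε/2 := by
    rw [Filter.eventually_all_finset]
    intro z _
    exact (pabs_inf_tendsto f x hd' z).eventually_lt_const (by linarith)
  obtain ⟨N, hN⟩ := eventually_atTop.1 hev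
  refine ⟨N, fun n hn => ?_⟩
  rw [Real.dist_eq, sub_zero]
  have h1 : |f (x n)| ≤ pabs f (x n) := abs_le_pabs f le_rfl
  have hbound : |x n| ≤ |a n - y n| + |x n| ⊓ |y n| := by
    have e1 : |a n| ≤ |a n - y n| + |y n| := by
      calc |a n| = |(a n - y n) + y n| := by congr 1; abel
        _ ≤ |a n - y n| + |y n| := abs_add_le _ _
    calc |x n| ≤ |x n| ⊓ (|a n - y n| + |y n|) := le_inf le_rfl ((hxa n).trans e1)
      _ ≤ |x n| ⊓ |a n - y n| + |x n| ⊓ |y n| :=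
          inf_add_le' (abs_nonneg _) (abs_nonneg _) (abs_nonneg _)
      _ ≤ |a n - y n| + |x n| ⊓ |y n| := add_le_add_left inf_le_right _
  have h2 : pabs f (x n) ≤ pabs f |a n - y n| + pabs f (|x n| ⊓ |y n|) :=
    pabs_le_add f (abs_nonneg _) (le_inf (abs_nonneg _) (abs_nonneg _)) hbound
  rw [pabs_abs] at h2
  have h3 := hN n hn (y n) (hyΦ n)
  have h4 := hyf n
  calc |f (x n)| ≤ pabs f (x n) := h1
    _ ≤ pabs f (a n - y n) + pabs f (|x n| ⊓ |y n|) := h2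
    _ < ε/2 + ε/2 := by linarith
    _ = ε := by ring

end
end

section
/- Let E and F be Banach lattices. If every Dunford–Pettis operator T : E → F is PL-compact, then either E′ has order continuous norm or F′ has order continuous norm. -/
open Filter Topology ZeroAtInfty Set Bornology

noncomputable section

section Aux

variable {G : Type*} [NormedAddCommGroup G] [Lattice G] [HasSolidNorm G] [IsOrderedAddMonoid G] [NormedSpace ℝ G]

lemma pos_apply_nonneg {f : G →L[ℝ] ℝ} (hf : dualLe 0 f) {x : G} (hx : 0 ≤ x) : 0 ≤ f x := by
  simpa using hf x hx

lemma pos_mono {f : G →L[ℝ] ℝ} (hf : dualLe 0 f) {x y : G} (hxy : x ≤ y) : f x ≤ f y := by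
  have := pos_apply_nonneg hf (sub_nonneg.mpr hxy)
  rw [map_sub] at this; linarith

lemma abs_apply_le {f : G →L[ℝ] ℝ} (hf : dualLe 0 f) (x : G) : |f x| ≤ f |x| := by
  rw [abs_le]
  constructor
  · have := pos_mono hf (neg_le_abs x); rw [map_neg] at this; linarith
  · exact pos_mono hf (le_abs_self x)

lemma pos_opNorm_mono {f g : G →L[ℝ] ℝ} (hf : dualLe 0 f) (hfg : dualLe f g) : ‖f‖ ≤ ‖g‖ := by
  refine ContinuousLinearMap.opNorm_le_bound _ (norm_nonneg g) fun x => ?_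
  have h1 : |f x| ≤ f |x| := abs_apply_le hf x
  have h2 : f |x| ≤ g |x| := hfg _ (abs_nonneg x)
  have h3 : g |x| ≤ ‖g‖ * ‖|x|‖ := (le_abs_self _).trans (g.le_opNorm _)
  rw [norm_abs_eq_norm] at h3
  calc ‖f x‖ = |f x| := rfl
    _ ≤ ‖g‖ * ‖x‖ := by linarith

lemma exists_pos_unit {f : G →L[ℝ] ℝ} (hf : dualLe 0 f) {c : ℝ} (hc : 0 ≤ c) (h : c < ‖f‖) :
    ∃ u : G, 0 ≤ u ∧ ‖u‖ ≤ 1 ∧ c < f u := by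
  by_contra hcon
  push_neg at hcon
  have hb : ∀ u : G, ‖u‖ ≤ 1 → ‖f u‖ ≤ c := by
    intro u hu
    calc ‖f u‖ = |f u| := rfl
      _ ≤ f |u| := abs_apply_le hf u
      _ ≤ c := hcon _ (abs_nonneg u) (by rw [norm_abs_eq_norm]; exact hu)
  have hle : ‖f‖ ≤ c := by
    refine ContinuousLinearMap.opNorm_le_bound _ hc fun x => ?_
    rcases eq_or_ne x 0 with rfl | hx
    · simpa using mul_nonneg hc (norm_nonneg (0 : G))
    · have hnx : 0 < ‖x‖ := norm_pos_iff.mpr hx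
      have h1 : ‖f (‖x‖⁻¹ • x)‖ ≤ c := hb _ (by
        rw [norm_smul, norm_inv, norm_norm, inv_mul_cancel₀ hnx.ne'])
      rw [map_smul, smul_eq_mul, Real.norm_eq_abs, abs_mul, abs_inv, abs_norm] at h1
      rw [Real.norm_eq_abs]
      have h2 : ‖x‖ * (‖x‖⁻¹ * |f x|) ≤ ‖x‖ * c := mul_le_mul_of_nonneg_left h1 (norm_nonneg x)
      calc |f x| = ‖x‖ * (‖x‖⁻¹ * |f x|) := by field_simp
        _ ≤ ‖x‖ * c := h2
        _ = c * ‖x‖ := mul_comm _ _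
  linarith

/-- Extraction of a "finitely-summably dominated" sequence of positive functionals with
norms bounded below, from the failure of dual order continuity. -/
lemma extract_of_not_docn (hc : ¬ DualOrderContinuousNorm G) :
    ∃ (f : G →L[ℝ] ℝ) (g : ℕ → G →L[ℝ] ℝ) (x : ℕ → G) (δ : ℝ), 0 < δ ∧
      (∀ n, dualLe 0 (g n)) ∧
      (∀ (S : Finset ℕ) (z : G), 0 ≤ z → ∑ n ∈ S, g n z ≤ f z) ∧
      (∀ n, 0 ≤ x n ∧ ‖x n‖ ≤ 1 ∧ δ ≤ g n (x n)) := by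
  unfold DualOrderContinuousNorm at hc
  push_neg at hc
  obtain ⟨ι, ipre, ine, hdir, f, hanti, hpos, hinf, hnt⟩ := hc
  letI := ipre
  haveI := ine
  -- membership in `atTop`
  have hmem : ∀ s : Set ι, s ∈ (atTop : Filter ι) ↔ ∃ i, Set.Ici i ⊆ s := by
    intro s
    rw [Filter.atTop, Filter.mem_iInf_of_directed]
    · simp only [Filter.mem_principal]
    · intro i j
      obtain ⟨k, hik, hjk⟩ := hdir i j
      exact ⟨k, Filter.principal_mono.mpr (Set.Ici_subset_Ici.mpr hik),
        Filter.principal_mono.mpr (Set.Ici_subset_Ici.mpr hjk)⟩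
  -- a uniform lower bound on the norms
  obtain ⟨ε, hε, hfreq⟩ : ∃ ε > 0, ∀ i, ∃ j, i ≤ j ∧ ε ≤ ‖f j‖ := by
    by_contra hcon
    push_neg at hcon
    apply hnt
    rw [Metric.tendsto_nhds]
    intro ε hε
    obtain ⟨i, hi⟩ := hcon ε hε
    rw [Filter.eventually_iff, hmem]
    refine ⟨i, fun j hj => ?_⟩
    have h2 : ‖f j‖ < ε := hi j hj
    simp only [Set.mem_setOf_eq, Real.dist_eq, sub_zero, abs_of_nonneg (norm_nonneg _)]
    exact h2
  have hεall : ∀ i, ε ≤ ‖f i‖ := by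
    intro i
    obtain ⟨j, hij, hj⟩ := hfreq i
    exact hj.trans (pos_opNorm_mono (hpos j) (hanti i j hij))
  -- pointwise infimum is zero
  set φ : G → ℝ := fun z => ⨅ i, f i z with hφdef
  have hbdd : ∀ {z : G}, 0 ≤ z → BddBelow (Set.range fun i => f i z) := by
    intro z hz
    exact ⟨0, by rintro r ⟨i, rfl⟩; exact pos_apply_nonneg (hpos i) hz⟩
  have hφle : ∀ (i : ι) {z : G}, 0 ≤ z → φ z ≤ f i z := fun i {z} hz => ciInf_le (hbdd hz) i
  have hφ0 : ∀ {z : G}, 0 ≤ z → 0 ≤ φ z := fun {z} hz =>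
    le_ciInf fun i => pos_apply_nonneg (hpos i) hz
  have hφadd : ∀ {y z : G}, 0 ≤ y → 0 ≤ z → φ (y + z) = φ y + φ z := by
    intro y z hy hz
    refine le_antisymm ?_ ?_
    · refine le_of_forall_pos_le_add fun δ hδ => ?_
      obtain ⟨i, hi⟩ : ∃ i, f i y < φ y + δ / 2 :=
        exists_lt_of_ciInf_lt (show φ y < φ y + δ / 2 by linarith)
      obtain ⟨j, hj⟩ : ∃ j, f j z < φ z + δ / 2 :=
        exists_lt_of_ciInf_lt (show φ z < φ z + δ / 2 by linarith)
      obtain ⟨k, hik, hjk⟩ := hdir i j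
      have h1 : φ (y + z) ≤ f k (y + z) := hφle k (add_nonneg hy hz)
      rw [map_add] at h1
      have h2 : f k y ≤ f i y := hanti i k hik y hy
      have h3 : f k z ≤ f j z := hanti j k hjk z hz
      linarith
    · refine le_ciInf fun i => ?_
      have := add_le_add (hφle i hy) (hφle i hz)
      rwa [← map_add] at this
  -- the pointwise infimum extends to a continuous linear lower bound, hence is zero
  have hkey : ∀ x : G, x⁺ = x + x⁻ := fun x => eq_add_of_sub_eq (posPart_sub_negPart x)
  set L0 : G → ℝ := fun z => φ (z⁺) - φ (z⁻) with hL0def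
  have hL0add : ∀ a b : G, L0 (a + b) = L0 a + L0 b := by
    intro a b
    have hid : (a + b)⁺ + (a⁻ + b⁻) = (a + b)⁻ + (a⁺ + b⁺) := by
      rw [hkey (a + b), hkey a, hkey b]; abel
    have h1 : φ ((a + b)⁺ + (a⁻ + b⁻)) = φ ((a + b)⁺) + (φ (a⁻) + φ (b⁻)) := by
      rw [hφadd (posPart_nonneg _) (add_nonneg (negPart_nonneg _) (negPart_nonneg _)),
        hφadd (negPart_nonneg _) (negPart_nonneg _)]
    have h2 : φ ((a + b)⁻ + (a⁺ + b⁺)) = φ ((a + b)⁻) + (φ (a⁺) + φ (b⁺)) := by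
      rw [hφadd (negPart_nonneg _) (add_nonneg (posPart_nonneg _) (posPart_nonneg _)),
        hφadd (posPart_nonneg _) (posPart_nonneg _)]
    have h3 : φ ((a + b)⁺) + (φ (a⁻) + φ (b⁻)) = φ ((a + b)⁻) + (φ (a⁺) + φ (b⁺)) := by
      rw [← h1, ← h2, hid]
    simp only [hL0def]
    linarith
  obtain ⟨i0⟩ := ine
  have hL0bound : ∀ z : G, |L0 z| ≤ ‖f i0‖ * ‖z‖ := by
    intro z
    have ha : φ (z⁺) ≤ f i0 (z⁺) := hφle i0 (posPart_nonneg _)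
    have hb : φ (z⁻) ≤ f i0 (z⁻) := hφle i0 (negPart_nonneg _)
    have hc1 : 0 ≤ φ (z⁺) := hφ0 (posPart_nonneg _)
    have hc2 : 0 ≤ φ (z⁻) := hφ0 (negPart_nonneg _)
    have habs : f i0 (z⁺) + f i0 (z⁻) = f i0 |z| := by rw [← map_add, posPart_add_negPart]
    have hfa : f i0 |z| ≤ ‖f i0‖ * ‖z‖ := by
      have := (le_abs_self _).trans ((f i0).le_opNorm |z|)
      rwa [norm_abs_eq_norm] at this
    rw [abs_le]
    constructor <;> simp only [hL0def] <;> linarith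
  have hL0cont : Continuous L0 := by
    have hlip : LipschitzWith (Real.toNNReal ‖f i0‖) L0 := by
      apply LipschitzWith.of_dist_le_mul
      intro a b
      have h1 : L0 a - L0 b = L0 (a - b) := by
        have := hL0add (a - b) b
        rw [sub_add_cancel] at this
        linarith
      rw [Real.dist_eq, h1]
      calc |L0 (a - b)| ≤ ‖f i0‖ * ‖a - b‖ := hL0bound _
        _ = Real.toNNReal ‖f i0‖ * dist a b := by
            rw [Real.coe_toNNReal _ (norm_nonneg _), dist_eq_norm]
    exact hlip.continuous
  set ℓ : G →L[ℝ] ℝ := (AddMonoidHom.mk' L0 hL0add).toRealLinearMap hL0cont with hℓdef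
  have hℓapp : ∀ z, ℓ z = L0 z := fun z => rfl
  have hφeq : ∀ {z : G}, 0 ≤ z → φ z = 0 := by
    intro z hz
    have hlow : ∀ i, dualLe ℓ (f i) := by
      intro i w hw
      rw [hℓapp]
      simp only [hL0def]
      rw [posPart_eq_self.mpr hw, negPart_eq_zero.mpr hw]
      have := hφle i hw
      have h0 : φ (0 : G) = 0 := by
        simp only [hφdef]
        have : ∀ i : ι, f i (0 : G) = 0 := fun i => map_zero (f i)
        simp only [this, ciInf_const]
      linarith
    have := hinf ℓ hlow z hz
    rw [hℓapp] at this
    simp only [hL0def] at this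
    rw [posPart_eq_self.mpr hz, negPart_eq_zero.mpr hz] at this
    have h0 : φ (0 : G) = 0 := by
      simp only [hφdef]
      have h00 : ∀ i : ι, f i (0 : G) = 0 := fun i => map_zero (f i)
      simp only [h00, ciInf_const]
    have h1 : 0 ≤ φ z := hφ0 hz
    simp only [ContinuousLinearMap.zero_apply] at this
    linarith
  have hptinf : ∀ {z : G}, 0 ≤ z → ∀ δ > (0:ℝ), ∃ i, f i z < δ := by
    intro z hz δ hδ
    have : φ z < δ := by rw [hφeq hz]; exact hδ
    exact exists_lt_of_ciInf_lt this
  -- selection of witnesses and of the chain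
  have hsel : ∀ i, ∃ u : G, 0 ≤ u ∧ ‖u‖ ≤ 1 ∧ ε / 2 < f i u := by
    intro i
    exact exists_pos_unit (hpos i) (by linarith) (lt_of_lt_of_le (by linarith) (hεall i))
  choose xsel hx1 hx2 hx3 using hsel
  have hpick : ∀ i, ∃ k, i ≤ k ∧ f k (xsel i) < ε / 4 := by
    intro i
    obtain ⟨j, hj⟩ := hptinf (hx1 i) (ε / 4) (by linarith)
    obtain ⟨k, hik, hjk⟩ := hdir i j
    exact ⟨k, hik, lt_of_le_of_lt (hanti j k hjk _ (hx1 i)) hj⟩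
  choose pick hpk1 hpk2 using hpick
  set a : ℕ → ι := fun n => pick^[n] i0 with hadef
  have ha : ∀ n, a (n + 1) = pick (a n) := fun n => Function.iterate_succ_apply' pick n i0
  have hastep : ∀ n, a n ≤ a (n + 1) := fun n => by rw [ha n]; exact hpk1 (a n)
  refine ⟨f (a 0), fun n => f (a n) - f (a (n + 1)), fun n => xsel (a n), ε / 4, by linarith,
    ?_, ?_, ?_⟩
  · intro n z hz
    simp only [ContinuousLinearMap.zero_apply, ContinuousLinearMap.sub_apply]
    have := hanti (a n) (a (n + 1)) (hastep n) z hz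
    linarith
  · intro S z hz
    set N := S.sup id + 1 with hN
    have hsub : S ⊆ Finset.range N := by
      intro n hn
      rw [Finset.mem_range, hN]
      exact Nat.lt_succ_of_le (Finset.le_sup (f := id) hn)
    have h1 : ∑ n ∈ S, (f (a n) - f (a (n + 1))) z ≤
        ∑ n ∈ Finset.range N, (f (a n) - f (a (n + 1))) z := by
      refine Finset.sum_le_sum_of_subset_of_nonneg hsub fun n _ _ => ?_
      simp only [ContinuousLinearMap.sub_apply]
      have := hanti (a n) (a (n + 1)) (hastep n) z hz
      linarith
    have h2 : ∑ n ∈ Finset.range N, (f (a n) - f (a (n + 1))) z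
        = f (a 0) z - f (a N) z := by
      simp only [ContinuousLinearMap.sub_apply]
      exact Finset.sum_range_sub' (fun n => f (a n) z) N
    have h3 : 0 ≤ f (a N) z := pos_apply_nonneg (hpos (a N)) hz
    linarith
  · intro n
    refine ⟨hx1 (a n), hx2 (a n), ?_⟩
    have h1 : ε / 2 < f (a n) (xsel (a n)) := hx3 (a n)
    have h2 : f (a (n + 1)) (xsel (a n)) < ε / 4 := by
      rw [ha n]; exact hpk2 (a n)
    simp only [ContinuousLinearMap.sub_apply]
    linarith

end Aux

lemma real_sign_abs_le (x : ℝ) : |Real.sign x| ≤ 1 := by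
  rcases lt_trichotomy x 0 with h | h | h
  · rw [Real.sign_of_neg h]; norm_num
  · rw [h, Real.sign_zero]; norm_num
  · rw [Real.sign_of_pos h]; norm_num

lemma real_sign_mul_self (x : ℝ) : Real.sign x * x = |x| := by
  rcases lt_trichotomy x 0 with h | h | h
  · rw [Real.sign_of_neg h, abs_of_neg h]; ring
  · rw [h, Real.sign_zero, abs_zero, mul_zero]
  · rw [Real.sign_of_pos h, abs_of_pos h]; ring

section Schur

variable {G : Type*} [NormedAddCommGroup G] [Lattice G] [HasSolidNorm G] [IsOrderedAddMonoid G] [NormedSpace ℝ G]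

lemma sum_abs_le_of_dom {f : G →L[ℝ] ℝ} {g : ℕ → G →L[ℝ] ℝ}
    (hg : ∀ n, dualLe 0 (g n))
    (hdom : ∀ (S : Finset ℕ) (z : G), 0 ≤ z → ∑ n ∈ S, g n z ≤ f z)
    (z : G) (S : Finset ℕ) : ∑ n ∈ S, |g n z| ≤ f |z| :=
  le_trans (Finset.sum_le_sum fun n _ => abs_apply_le (hg n) z)
    (hdom S |z| (abs_nonneg z))

lemma summable_abs_of_dom {f : G →L[ℝ] ℝ} {g : ℕ → G →L[ℝ] ℝ}
    (hg : ∀ n, dualLe 0 (g n))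
    (hdom : ∀ (S : Finset ℕ) (z : G), 0 ≤ z → ∑ n ∈ S, g n z ≤ f z)
    (z : G) : Summable fun n => |g n z| :=
  summable_of_sum_range_le (fun n => abs_nonneg _)
    (fun N => sum_abs_le_of_dom hg hdom z (Finset.range N))

lemma tsum_abs_le_of_dom {f : G →L[ℝ] ℝ} {g : ℕ → G →L[ℝ] ℝ}
    (hg : ∀ n, dualLe 0 (g n))
    (hdom : ∀ (S : Finset ℕ) (z : G), 0 ≤ z → ∑ n ∈ S, g n z ≤ f z)
    (z : G) : ∑' n, |g n z| ≤ f |z| :=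
  Summable.tsum_le_of_sum_le (summable_abs_of_dom hg hdom z) (sum_abs_le_of_dom hg hdom z)

lemma abs_tsum_le_tsum_abs' {c : ℕ → ℝ} (h : Summable fun n => |c n|) :
    |∑' n, c n| ≤ ∑' n, |c n| := by
  simpa [Real.norm_eq_abs] using
    norm_tsum_le_tsum_norm (f := c) (by simpa [Real.norm_eq_abs] using h)

/-- A bounded sequence of signs paired against a dominated sequence of functionals yields
a continuous linear functional. -/
lemma mk_sign_functional {f : G →L[ℝ] ℝ} {g : ℕ → G →L[ℝ] ℝ}
    (hg : ∀ n, dualLe 0 (g n))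
    (hdom : ∀ (S : Finset ℕ) (z : G), 0 ≤ z → ∑ n ∈ S, g n z ≤ f z)
    (b : ℕ → ℝ) (hb : ∀ n, |b n| ≤ 1) :
    ∃ φ : G →L[ℝ] ℝ, ∀ z, φ z = ∑' n, b n * g n z := by
  have habs : ∀ (z : G) (n : ℕ), |b n * g n z| ≤ |g n z| := by
    intro z n
    rw [abs_mul]
    calc |b n| * |g n z| ≤ 1 * |g n z| :=
          mul_le_mul_of_nonneg_right (hb n) (abs_nonneg _)
      _ = |g n z| := one_mul _
  have hs : ∀ z : G, Summable fun n => b n * g n z := by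
    intro z
    refine Summable.of_abs ?_
    exact Summable.of_nonneg_of_le (fun n => abs_nonneg _) (habs z)
      (summable_abs_of_dom hg hdom z)
  have hbound : ∀ z : G, |∑' n, b n * g n z| ≤ ‖f‖ * ‖z‖ := by
    intro z
    have h1 : |∑' n, b n * g n z| ≤ ∑' n, |b n * g n z| :=
      abs_tsum_le_tsum_abs' ((hs z).abs)
    have h2 : ∑' n, |b n * g n z| ≤ ∑' n, |g n z| :=
      Summable.tsum_le_tsum (habs z) ((hs z).abs) (summable_abs_of_dom hg hdom z)
    have h3 : ∑' n, |g n z| ≤ f |z| := tsum_abs_le_of_dom hg hdom z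
    have h4 : f |z| ≤ ‖f‖ * ‖z‖ := by
      have := (le_abs_self _).trans (f.le_opNorm |z|)
      rwa [norm_abs_eq_norm] at this
    linarith
  let L : G →ₗ[ℝ] ℝ :=
    { toFun := fun z => ∑' n, b n * g n z
      map_add' := by
        intro y z
        simp only [map_add, mul_add]
        exact Summable.tsum_add (hs y) (hs z)
      map_smul' := by
        intro c z
        simp only [map_smul, smul_eq_mul, RingHom.id_apply]
        rw [← tsum_mul_left]
        congr 1
        ext n
        ring }
  refine ⟨L.mkContinuous ‖f‖ (fun z => by
    simpa [L, Real.norm_eq_abs] using hbound z), fun z => rfl⟩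

/-- ℓ¹-Schur-type statement: weakly null sequences paired against a dominated sequence of
positive functionals go to zero in the associated ℓ¹ norm. -/
lemma schur_aux {f : G →L[ℝ] ℝ} {g : ℕ → G →L[ℝ] ℝ}
    (hg : ∀ n, dualLe 0 (g n))
    (hdom : ∀ (S : Finset ℕ) (z : G), 0 ≤ z → ∑ n ∈ S, g n z ≤ f z)
    {u : ℕ → G} (hu : WeaklyNull u) :
    Tendsto (fun j => ∑' n, |g n (u j)|) atTop (𝓝 0) := by
  by_contra hA
  set A : ℕ → ℝ := fun j => ∑' n, |g n (u j)| with hAdef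
  have hA0 : ∀ j, 0 ≤ A j := fun j => tsum_nonneg fun n => abs_nonneg _
  rw [Metric.tendsto_nhds] at hA
  push_neg at hA
  obtain ⟨δ, hδpos, hδ⟩ := hA
  have hδ' : ∃ᶠ j in atTop, δ ≤ A j := by
    have h1 := Filter.not_eventually.mp hδ
    refine h1.mono fun j hj => ?_
    simp only [not_not, Real.dist_eq, sub_zero, abs_of_nonneg (hA0 j)] at hj
    exact hj
  obtain ⟨ψ, hψ, hψδ⟩ := Filter.extraction_of_frequently_atTop hδ'
  set v : ℕ → G := fun k => u (ψ k) with hvdef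
  have hv : WeaklyNull v := fun φ => (hu φ).comp hψ.tendsto_atTop
  have sv : ∀ k, Summable fun n => |g n (v k)| := fun k => summable_abs_of_dom hg hdom _
  have hAv : ∀ k, δ ≤ ∑' n, |g n (v k)| := fun k => hψδ k
  -- the inductive step producing humps
  have hstep : ∀ p : ℕ × ℕ, ∃ q : ℕ × ℕ, p.1 < q.1 ∧ p.2 < q.2 ∧
      (∑ n ∈ Finset.range p.2, |g n (v q.1)| < δ / 8) ∧
      (∑' n, |g (n + q.2) (v q.1)| < δ / 8) := by
    rintro ⟨J, N⟩
    have h1 : Tendsto (fun j => ∑ n ∈ Finset.range N, |g n (v j)|) atTop (𝓝 0) := by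
      have h0 : ∀ n ∈ Finset.range N, Tendsto (fun j => |g n (v j)|) atTop (𝓝 0) := by
        intro n _
        simpa using (hv (g n)).abs
      simpa using tendsto_finset_sum (Finset.range N) h0
    have h2 : ∀ᶠ j in atTop, ∑ n ∈ Finset.range N, |g n (v j)| < δ / 8 :=
      h1.eventually_lt_const (by linarith)
    obtain ⟨J', hJ'2, hJ'1⟩ := ((eventually_gt_atTop J).and h2).exists
    have h3 : Tendsto (fun M => ∑ n ∈ Finset.range M, |g n (v J')|) atTop
        (𝓝 (∑' n, |g n (v J')|)) := (sv J').hasSum.tendsto_sum_nat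
    have h4 : Tendsto (fun M => ∑' n, |g n (v J')| - ∑ n ∈ Finset.range M, |g n (v J')|)
        atTop (𝓝 0) := by
      have := tendsto_const_nhds (x := ∑' n, |g n (v J')|) (f := atTop (α := ℕ)) |>.sub h3
      simpa using this
    have h5 : ∀ᶠ M in atTop,
        ∑' n, |g n (v J')| - ∑ n ∈ Finset.range M, |g n (v J')| < δ / 8 :=
      h4.eventually_lt_const (by linarith)
    obtain ⟨M, hM2, hM1⟩ := ((eventually_gt_atTop N).and h5).exists
    refine ⟨(J', M), hJ'2, hM2, hJ'1, ?_⟩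
    have h6 := Summable.sum_add_tsum_nat_add M (sv J')
    simp only at h6 ⊢
    linarith
  choose step hst1 hst2 hst3 hst4 using hstep
  set c : ℕ → ℕ × ℕ := fun k => step^[k] (0, 0) with hcdef
  have hc : ∀ k, c (k + 1) = step (c k) := fun k => Function.iterate_succ_apply' step k (0, 0)
  set Jc : ℕ → ℕ := fun k => (c k).1 with hJcdef
  set Mc : ℕ → ℕ := fun k => (c k).2 with hMcdef
  have hM0 : Mc 0 = 0 := rfl
  have hMmono : StrictMono Mc := strictMono_nat_of_lt_succ fun k => by
    have h := hst2 (c k); rw [← hc k] at h; exact h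
  have hJmono : StrictMono Jc := strictMono_nat_of_lt_succ fun k => by
    have h := hst1 (c k); rw [← hc k] at h; exact h
  have hMle : ∀ k, k ≤ Mc k := fun k => by
    have := hMmono.le_apply (x := k); omega
  -- block index
  classical
  set kdx : ℕ → ℕ := fun n => Nat.findGreatest (fun k => Mc k ≤ n) n with hkdxdef
  have hkdxle : ∀ n k, k ≤ n → Mc k ≤ n → k ≤ kdx n := by
    intro n k h1 h2
    exact Nat.le_findGreatest (P := fun k => Mc k ≤ n) h1 h2
  have hkdx1 : ∀ n, Mc (kdx n) ≤ n := by
    intro n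
    have h0 : (fun k => Mc k ≤ n) 0 := by simpa [hM0] using Nat.zero_le n
    exact Nat.findGreatest_spec (P := fun k => Mc k ≤ n) (Nat.zero_le n) h0
  have hkdx2 : ∀ n, n < Mc (kdx n + 1) := by
    intro n
    by_contra hcon
    push_neg at hcon
    have h1 : kdx n + 1 ≤ n := le_trans (hMle _) hcon
    have h2 : kdx n + 1 ≤ kdx n := hkdxle n (kdx n + 1) h1 hcon
    omega
  set b : ℕ → ℝ := fun n => Real.sign (g n (v (Jc (kdx n + 1)))) with hbdef
  have hb : ∀ n, |b n| ≤ 1 := fun n => real_sign_abs_le _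
  obtain ⟨φ, hφ⟩ := mk_sign_functional hg hdom b hb
  -- key lower bound along the humps
  have hkey : ∀ k, δ / 2 ≤ φ (v (Jc (k + 1))) := by
    intro k
    set w : G := v (Jc (k + 1)) with hwdef
    set d : ℕ → ℝ := fun n => |g n w| with hddef
    set cc : ℕ → ℝ := fun n => b n * g n w with hccdef
    have hsd : Summable d := sv _
    have hdcc : ∀ n, |cc n| ≤ d n := by
      intro n
      rw [hccdef]
      simp only [abs_mul]
      calc |b n| * |g n w| ≤ 1 * |g n w| :=
            mul_le_mul_of_nonneg_right (hb n) (abs_nonneg _)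
        _ = d n := one_mul _
    have hscc : Summable cc := Summable.of_abs
      (Summable.of_nonneg_of_le (fun n => abs_nonneg _) hdcc hsd)
    have hMk : Mc k ≤ Mc (k + 1) := (hMmono (Nat.lt_succ_self k)).le
    have hhead : ∑ n ∈ Finset.range (Mc k), d n < δ / 8 := by
      have := hst3 (c k)
      rw [← hc k] at this
      exact this
    have htail : ∑' n, d (n + Mc (k + 1)) < δ / 8 := by
      have := hst4 (c k)
      rw [← hc k] at this
      exact this
    have hmid : ∀ n ∈ Finset.Ico (Mc k) (Mc (k + 1)), cc n = d n := by
      intro n hn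
      rw [Finset.mem_Ico] at hn
      have hk : kdx n = k := by
        have hle : k ≤ kdx n := hkdxle n k (le_trans (hMle k) hn.1) hn.1
        have hge : kdx n ≤ k := by
          by_contra hlt
          push_neg at hlt
          have h1 : Mc (k + 1) ≤ Mc (kdx n) := hMmono.monotone hlt
          have h2 : Mc (kdx n) ≤ n := hkdx1 n
          omega
        omega
      have hbn : b n = Real.sign (g n w) := by simp only [hbdef, hk, hwdef]
      show b n * g n w = |g n w|
      rw [hbn]
      exact real_sign_mul_self _
    have hsplit1 := Summable.sum_add_tsum_nat_add (Mc (k + 1)) hscc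
    have hsplit2 := Summable.sum_add_tsum_nat_add (Mc (k + 1)) hsd
    have hsum_split : ∑ n ∈ Finset.range (Mc (k + 1)), cc n
        = ∑ n ∈ Finset.range (Mc k), cc n + ∑ n ∈ Finset.Ico (Mc k) (Mc (k + 1)), cc n := by
      have h := Finset.sum_Ico_consecutive cc (Nat.zero_le (Mc k)) hMk
      simp only [← Finset.range_eq_Ico] at h
      linarith
    have hsum_splitd : ∑ n ∈ Finset.range (Mc (k + 1)), d n
        = ∑ n ∈ Finset.range (Mc k), d n + ∑ n ∈ Finset.Ico (Mc k) (Mc (k + 1)), d n := by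
      have h := Finset.sum_Ico_consecutive d (Nat.zero_le (Mc k)) hMk
      simp only [← Finset.range_eq_Ico] at h
      linarith
    have hmid_eq : ∑ n ∈ Finset.Ico (Mc k) (Mc (k + 1)), cc n
        = ∑ n ∈ Finset.Ico (Mc k) (Mc (k + 1)), d n := Finset.sum_congr rfl hmid
    have hAw : δ ≤ ∑' n, d n := hAv (Jc (k + 1))
    have hheadb : |∑ n ∈ Finset.range (Mc k), cc n| ≤ ∑ n ∈ Finset.range (Mc k), d n :=
      (Finset.abs_sum_le_sum_abs _ _).trans (Finset.sum_le_sum fun n _ => hdcc n)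
    have htailb : |∑' n, cc (n + Mc (k + 1))| ≤ ∑' n, d (n + Mc (k + 1)) := by
      have hs1 : Summable fun n => cc (n + Mc (k + 1)) :=
        (summable_nat_add_iff (Mc (k + 1))).mpr hscc
      have hs2 : Summable fun n => d (n + Mc (k + 1)) :=
        (summable_nat_add_iff (Mc (k + 1))).mpr hsd
      exact (abs_tsum_le_tsum_abs' hs1.abs).trans
        (Summable.tsum_le_tsum (fun n => hdcc _) hs1.abs hs2)
    have hheadnn : 0 ≤ ∑ n ∈ Finset.range (Mc k), d n :=
      Finset.sum_nonneg fun n _ => abs_nonneg _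
    have htailnn : 0 ≤ ∑' n, d (n + Mc (k + 1)) :=
      tsum_nonneg fun n => abs_nonneg _
    have hφw : φ w = ∑' n, cc n := hφ w
    rw [hφw]
    have hh1 : |∑ n ∈ Finset.range (Mc k), cc n| < δ / 8 := lt_of_le_of_lt hheadb hhead
    have hh2 : |∑' n, cc (n + Mc (k + 1))| < δ / 8 := lt_of_le_of_lt htailb htail
    rw [abs_lt] at hh1 hh2
    linarith
  -- contradiction with weak nullity
  have hlim : Tendsto (fun k => φ (v (Jc (k + 1)))) atTop (𝓝 0) := by
    have h1 : Tendsto (fun k => Jc (k + 1)) atTop atTop :=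
      hJmono.tendsto_atTop.comp (tendsto_add_atTop_nat 1)
    exact (hv φ).comp h1
  have : δ / 2 ≤ 0 := ge_of_tendsto hlim (Filter.Eventually.of_forall hkey)
  linarith

end Schur


theorem stmt18 {E F : Type*} [NormedAddCommGroup E] [Lattice E] [HasSolidNorm E] [IsOrderedAddMonoid E] [NormedSpace ℝ E] [CompleteSpace E] [NormedAddCommGroup F] [Lattice F] [HasSolidNorm F] [IsOrderedAddMonoid F] [NormedSpace ℝ F] [CompleteSpace F]
    (h : ∀ T : E →L[ℝ] F, DunfordPettisOp T → PLCompact T) :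
    DualOrderContinuousNorm E ∨ DualOrderContinuousNorm F := by
  by_contra hcon
  push_neg at hcon
  obtain ⟨hE, hF⟩ := hcon
  obtain ⟨fE, gE, xE, δE, hδE, hgE, hdomE, hxE⟩ := extract_of_not_docn hE
  obtain ⟨fF, gF, yF, δF, hδF, hgF, hdomF, hyF⟩ := extract_of_not_docn hF
  have hyF0 : ∀ n, 0 ≤ yF n := fun n => (hyF n).1
  have hyF1 : ∀ n, ‖yF n‖ ≤ 1 := fun n => (hyF n).2.1
  -- summability facts on the E side
  have hsumE : ∀ z : E, Summable fun n => gE n |z| := fun z =>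
    summable_of_sum_range_le (fun n => pos_apply_nonneg (hgE n) (abs_nonneg z))
      (fun N => hdomE (Finset.range N) |z| (abs_nonneg z))
  have habsE : ∀ z : E, Summable fun n => |gE n z| := fun z =>
    summable_abs_of_dom hgE hdomE z
  have htsumE : ∀ z : E, ∑' n, |gE n z| ≤ fE |z| := fun z => tsum_abs_le_of_dom hgE hdomE z
  -- summability on the F side (used for decay of `gF n` on fixed vectors)
  have hsumF : ∀ n, Summable fun m => gF m (yF n) := by
    intro n
    have h := summable_of_sum_range_le (c := fF (yF n))
      (fun m => pos_apply_nonneg (hgF m) (hyF0 n))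
      (fun N => by
        have := hdomF (Finset.range N) (yF n) (hyF0 n)
        exact this)
    exact h
  -- bound on `gF m (yF k)`
  have hgFb : ∀ m k, 0 ≤ gF m (yF k) ∧ gF m (yF k) ≤ ‖fF‖ := by
    intro m k
    constructor
    · exact pos_apply_nonneg (hgF m) (hyF0 k)
    · have h1 : gF m (yF k) ≤ fF (yF k) := by
        have := hdomF {m} (yF k) (hyF0 k)
        simpa using this
      have h2 : fF (yF k) ≤ ‖fF‖ * ‖yF k‖ := (le_abs_self _).trans (fF.le_opNorm _)
      have h3 : ‖fF‖ * ‖yF k‖ ≤ ‖fF‖ * 1 :=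
        mul_le_mul_of_nonneg_left (hyF1 k) (norm_nonneg _)
      linarith [h3, mul_one ‖fF‖]
  -- the operator
  have hnormv : ∀ (z : E) (n : ℕ), ‖gE n z • yF n‖ ≤ |gE n z| := by
    intro z n
    rw [norm_smul, Real.norm_eq_abs]
    exact mul_le_of_le_one_right (abs_nonneg _) (hyF1 n)
  have hvsum : ∀ z : E, Summable fun n => gE n z • yF n := by
    intro z
    refine Summable.of_norm ?_
    exact Summable.of_nonneg_of_le (fun n => norm_nonneg _) (hnormv z) (habsE z)
  let Tl : E →ₗ[ℝ] F :=
    { toFun := fun z => ∑' n, gE n z • yF n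
      map_add' := by
        intro y z
        simp only [map_add, add_smul]
        exact Summable.tsum_add (hvsum y) (hvsum z)
      map_smul' := by
        intro c z
        simp only [map_smul, smul_eq_mul, RingHom.id_apply, ← smul_smul]
        exact Summable.tsum_const_smul c (hvsum z) }
  have hTlb : ∀ z, ‖Tl z‖ ≤ ∑' n, |gE n z| := by
    intro z
    have h1 : Summable fun n => ‖gE n z • yF n‖ :=
      Summable.of_nonneg_of_le (fun n => norm_nonneg _) (hnormv z) (habsE z)
    exact (norm_tsum_le_tsum_norm h1).trans (Summable.tsum_le_tsum (hnormv z) h1 (habsE z))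
  have hTlbound : ∀ z, ‖Tl z‖ ≤ ‖fE‖ * ‖z‖ := by
    intro z
    have h2 : fE |z| ≤ ‖fE‖ * ‖z‖ := by
      have := (le_abs_self _).trans (fE.le_opNorm |z|)
      rwa [norm_abs_eq_norm] at this
    linarith [hTlb z, htsumE z]
  let T : E →L[ℝ] F := Tl.mkContinuous ‖fE‖ hTlbound
  have hTz : ∀ z, T z = ∑' n, gE n z • yF n := fun z => rfl
  -- T is Dunford–Pettis
  have hDP : DunfordPettisOp T := by
    intro u hu
    refine squeeze_zero (fun j => norm_nonneg _) (fun j => ?_) (schur_aux hgE hdomE hu)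
    exact hTlb (u j)
  have hPL := h T hDP
  -- key estimates against `pabs fF`
  have hpabs : ∀ (n : ℕ) (w : F), |gF n w| ≤ pabs fF w := by
    intro n w
    have h1 : |gF n w| ≤ gF n |w| := abs_apply_le (hgF n) w
    have h2 : gF n |w| ≤ fF |w| := by
      have := hdomF {n} |w| (abs_nonneg w)
      simpa using this
    have h3 : fF |w| ≤ pabs fF w := by
      apply le_csSup
      · refine ⟨‖fF‖ * ‖w‖, ?_⟩
        rintro r ⟨y, hy, rfl⟩
        have hyw : ‖y‖ ≤ ‖w‖ := norm_le_norm_of_abs_le_abs hy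
        calc fF y ≤ |fF y| := le_abs_self _
          _ ≤ ‖fF‖ * ‖y‖ := fF.le_opNorm y
          _ ≤ ‖fF‖ * ‖w‖ := mul_le_mul_of_nonneg_left hyw (norm_nonneg _)
      · exact ⟨|w|, by simp [abs_abs], rfl⟩
    linarith
  -- scalar series for `gF n (T z)`
  have hprodb : ∀ (n k : ℕ) (z : E), |gE k z * gF n (yF k)| ≤ gE k |z| * ‖fF‖ := by
    intro n k z
    rw [abs_mul]
    have h1 : |gE k z| ≤ gE k |z| := abs_apply_le (hgE k) z
    have h2 : |gF n (yF k)| ≤ ‖fF‖ := by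
      rw [abs_of_nonneg (hgFb n k).1]; exact (hgFb n k).2
    exact mul_le_mul h1 h2 (abs_nonneg _) (pos_apply_nonneg (hgE k) (abs_nonneg z))
  have hscal : ∀ (n : ℕ) (z : E), Summable fun k => gE k z * gF n (yF k) := by
    intro n z
    refine Summable.of_abs ?_
    exact Summable.of_nonneg_of_le (fun k => abs_nonneg _) (hprodb n · z)
      ((hsumE z).mul_right ‖fF‖)
  have heval : ∀ (n : ℕ) (z : E), gF n (T z) = ∑' k, gE k z * gF n (yF k) := by
    intro n z
    rw [hTz, (gF n).map_tsum (hvsum z)]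
    simp only [map_smul, smul_eq_mul]
  have hTx : ∀ n, δE * δF ≤ gF n (T (xE n)) := by
    intro n
    rw [heval]
    have hterm : δE * δF ≤ gE n (xE n) * gF n (yF n) :=
      mul_le_mul (hxE n).2.2 (hyF n).2.2 hδF.le
        (pos_apply_nonneg (hgE n) (hxE n).1)
    refine hterm.trans (Summable.le_tsum (hscal n (xE n)) n fun k _ => ?_)
    exact mul_nonneg (pos_apply_nonneg (hgE k) (hxE n).1)
      (pos_apply_nonneg (hgF n) (hyF0 k))
  have hdecay : ∀ z : E, Tendsto (fun n => gF n (T z)) atTop (𝓝 0) := by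
    intro z
    have h0 : Tendsto (fun n => ∑' k, gE k z * gF n (yF k)) atTop (𝓝 (∑' _ : ℕ, (0:ℝ))) := by
      refine tendsto_tsum_of_dominated_convergence ((hsumE z).mul_right ‖fF‖) ?_ ?_
      · intro k
        have hk : Tendsto (fun n => gF n (yF k)) atTop (𝓝 0) :=
          (hsumF k).tendsto_atTop_zero
        simpa using hk.const_mul (gE k z)
      · refine Filter.Eventually.of_forall fun n k => ?_
        rw [Real.norm_eq_abs]
        exact hprodb n k z
    rw [tsum_zero] at h0
    exact Tendsto.congr (fun n => (heval n z).symm) h0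
  -- derive the contradiction with PL-compactness
  have hε0 : 0 < δE * δF / 2 := by positivity
  obtain ⟨Φ, hΦsub, hΦnet⟩ := hPL (δE * δF / 2) hε0 {fF}
  have hΦdec : ∀ z ∈ Φ, ∀ᶠ n in atTop, gF n z < δE * δF / 2 := by
    intro z hz
    obtain ⟨w, _, hw⟩ := hΦsub hz
    rw [← hw]
    exact (hdecay w).eventually_lt_const hε0
  have hall : ∀ᶠ n in atTop, ∀ z ∈ Φ, gF n z < δE * δF / 2 :=
    (Filter.eventually_all_finset Φ).mpr hΦdec
  obtain ⟨n, hn⟩ := hall.exists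
  have hmemx : T (xE n) ∈ (⇑T) '' Metric.closedBall 0 1 := by
    refine ⟨xE n, ?_, rfl⟩
    rw [Metric.mem_closedBall, dist_zero_right]
    exact (hxE n).2.1
  obtain ⟨y, hyΦ, hynet⟩ := hΦnet (T (xE n)) hmemx
  have h5 := hynet fF (Finset.mem_singleton_self fF)
  have h7 := hpabs n (T (xE n) - y)
  have h8 : gF n (T (xE n)) - gF n y ≤ |gF n (T (xE n) - y)| := by
    rw [map_sub]
    exact le_abs_self _
  have h9 := hTx n
  have h10 := hn y hyΦ
  linarith


end
end
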